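/- Let p ≥ 4 be an integer and let r : ℤ → ℝ³ be a nondegenerate discrete centroaffine space curve which is closed with period p and satisfies τ_n = 0 for all n (a planar closed p-gon), with curvatures κ_n, κ̄_n (which are p-periodic). Define the p×p real matrix S, with rows and columns indexed by ℤ/pℤ, by S(n, n−1) = κ_n, S(n, n) = −κ_n − κ̄_n, S(n, n+1) = 1 + κ̄_n, S(n, n+2) = −1, and all other entries 0 (indices taken modulo p). Then the rank of S equals p − 3; equivalently, the kernel of S is the 3-dimensional space spanned by the three coordinate sequences n ↦ (r(n))_i, i = 1, 2, 3. -/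

import Mathlib

/-- Determinant of the 3×3 matrix with columns `u`, `v`, `w`. -/
noncomputable def det3 (u v w : Fin 3 → ℝ) : ℝ := (Matrix.of ![u, v, w]).det

/-- Edge tangent vector of a discrete space curve. -/
def tang3 (r : ℤ → Fin 3 → ℝ) (k : ℤ) : Fin 3 → ℝ := r (k + 1) - r k

/-- Nondegeneracy of a discrete centroaffine space curve. -/
def Nondeg3 (r : ℤ → Fin 3 → ℝ) : Prop :=
  ∀ k : ℤ, det3 (r (k - 1)) (r k) (r (k + 1)) ≠ 0

/-- First centroaffine curvature. -/
noncomputable def kappa3 (r : ℤ → Fin 3 → ℝ) (k : ℤ) : ℝ :=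
  det3 (r k) (r (k + 1)) (r (k + 2)) / det3 (r (k - 1)) (r k) (r (k + 1))

/-- Second centroaffine curvature. -/
noncomputable def kbar3 (r : ℤ → Fin 3 → ℝ) (k : ℤ) : ℝ :=
  det3 (r (k + 1)) (tang3 r (k - 1)) (tang3 r (k + 1)) /
    det3 (r k) (tang3 r (k - 1)) (tang3 r k)

/-- Centroaffine torsion. -/
noncomputable def tau3 (r : ℤ → Fin 3 → ℝ) (k : ℤ) : ℝ :=
  det3 (tang3 r (k - 1)) (tang3 r k) (tang3 r (k + 1)) /
    det3 (r (k - 1)) (r k) (r (k + 1))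

lemma cramer_det3 (a b c d : Fin 3 → ℝ) (i : Fin 3) :
    det3 a b c * d i = det3 d b c * a i + det3 a d c * b i + det3 a b d * c i := by
  fin_cases i <;> simp [det3, Matrix.det_fin_three, Matrix.cons_val_two, Matrix.tail_cons] <;> ring

lemma key_rec (r : ℤ → Fin 3 → ℝ) (hr : Nondeg3 r) (hτ : ∀ n : ℤ, tau3 r n = 0)
    (k : ℤ) (i : Fin 3) :
    r (k + 2) i = kappa3 r k * r (k - 1) i + (-kappa3 r k - kbar3 r k) * r k i
      + (1 + kbar3 r k) * r (k + 1) i := by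
  have hD := hr k
  have ht0 := hτ k
  set a := r (k - 1) with ha
  set b := r k with hb
  set c := r (k + 1) with hc
  set d := r (k + 2) with hd
  have e1 : k - 1 + 1 = k := by ring
  have htm : tang3 r (k - 1) = b - a := by rw [tang3, e1]
  have htk : tang3 r k = c - b := rfl
  have htp : tang3 r (k + 1) = d - c := by rw [tang3, show k + 1 + 1 = k + 2 by ring]
  have hden : det3 b (b - a) (c - b) = det3 a b c := by
    simp [det3, Matrix.det_fin_three, Matrix.cons_val_two, Matrix.tail_cons]; ring
  have hkb : kbar3 r k = det3 c (b - a) (d - c) / det3 a b c := by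
    rw [kbar3, htm, htk, htp, hden]
  have hT : det3 (b - a) (c - b) (d - c) = 0 := by
    rw [tau3, htm, htk, htp, div_eq_zero_iff] at ht0
    tauto
  have hcr := cramer_det3 a b c d i
  rw [kappa3, hkb]
  set D := det3 a b c with hDdef
  simp only [det3, Matrix.det_fin_three, Matrix.of_apply, Matrix.cons_val', Matrix.cons_val_zero,
    Matrix.cons_val_one, Matrix.head_cons, Matrix.head_fin_const, Matrix.cons_val_fin_one,
    Matrix.cons_val_two, Matrix.tail_cons,
    Pi.sub_apply] at hT hcr hDdef ⊢
  field_simp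
  rw [hDdef] at hcr ⊢
  linear_combination hcr + (c i) * hT

section helpers
variable {p : ℕ} [NeZero p]

omit [NeZero p] in
lemma natcast_ne_zero_zmod {k : ℕ} (h0 : 0 < k) (hk : k < p) : ((k : ℕ) : ZMod p) ≠ 0 := by
  intro h
  have := ZMod.val_cast_of_lt hk
  rw [h, ZMod.val_zero] at this
  omega

lemma sum4 (a b c d : ZMod p) (hab : a ≠ b) (hac : a ≠ c) (had : a ≠ d)
    (hbc : b ≠ c) (hbd : b ≠ d) (hcd : c ≠ d) (A B C E : ℝ) (v : ZMod p → ℝ) :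
    (∑ m : ZMod p, (if m = a then A else if m = b then B else if m = c then C
        else if m = d then E else 0) * v m)
      = A * v a + B * v b + C * v c + E * v d := by
  have hpt : ∀ m : ZMod p,
      (if m = a then A else if m = b then B else if m = c then C
        else if m = d then E else 0) * v m
      = (if m = a then A * v a else 0) + ((if m = b then B * v b else 0)
        + ((if m = c then C * v c else 0) + (if m = d then E * v d else 0))) := by
    intro m
    by_cases h1 : m = a
    · subst h1; simp [hab, hac, had]
    by_cases h2 : m = b
    · subst h2; simp [h1, hbc, hbd]
    by_cases h3 : m = c
    · subst h3; simp [h1, h2, hcd]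
    by_cases h4 : m = d
    · subst h4; simp [h1, h2, h3]
    simp [h1, h2, h3, h4]
  rw [Finset.sum_congr rfl fun m _ => hpt m]
  simp [Finset.sum_add_distrib]; ring

end helpers

theorem stmt_14 (p : ℕ) [NeZero p] (hp : 4 ≤ p) (r : ℤ → Fin 3 → ℝ) (hr : Nondeg3 r)
    (hclosed : ∀ k : ℤ, r (k + p) = r k) (hτ : ∀ n : ℤ, tau3 r n = 0) :
    (Matrix.of fun n m : ZMod p =>
      if m = n - 1 then kappa3 r (n.val : ℤ)
      else if m = n then -kappa3 r (n.val : ℤ) - kbar3 r (n.val : ℤ)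
      else if m = n + 1 then 1 + kbar3 r (n.val : ℤ)
      else if m = n + 2 then (-1 : ℝ)
      else 0).rank = p - 3 := by
  set S : Matrix (ZMod p) (ZMod p) ℝ := Matrix.of fun n m : ZMod p =>
      if m = n - 1 then kappa3 r (n.val : ℤ)
      else if m = n then -kappa3 r (n.val : ℤ) - kbar3 r (n.val : ℤ)
      else if m = n + 1 then 1 + kbar3 r (n.val : ℤ)
      else if m = n + 2 then (-1 : ℝ)
      else 0 with hSdef
  -- periodicity
  have hmul : ∀ t : ℤ, ∀ z : ℤ, r (z + p * t) = r z := by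
    intro t
    induction t using Int.induction_on with
    | zero => simp
    | succ t ih =>
      intro z
      have h1 := hclosed (z + p * t)
      rw [show z + (p : ℤ) * ((t : ℤ) + 1) = z + p * t + p by ring, h1, ih]
    | pred t ih =>
      intro z
      have h1 := hclosed (z + p * (-(t : ℤ) - 1))
      have e : z + (p : ℤ) * (-(t : ℤ) - 1) + p = z + p * (-(t : ℤ)) := by ring
      rw [e] at h1
      rw [← h1, ih]
  have hper : ∀ z w : ℤ, ((z : ZMod p) = (w : ZMod p)) → r z = r w := by
    intro z w h
    have hdvd : (p : ℤ) ∣ z - w := by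
      rwa [← ZMod.intCast_zmod_eq_zero_iff_dvd, Int.cast_sub, sub_eq_zero]
    obtain ⟨t, ht⟩ := hdvd
    have : z = w + p * t := by omega
    rw [this, hmul]
  -- distinctness of the four indices
  have h1 : (1 : ZMod p) ≠ 0 := by
    have := natcast_ne_zero_zmod (p := p) (k := 1) one_pos (by omega); simpa using this
  have h2 : (2 : ZMod p) ≠ 0 := by
    have := natcast_ne_zero_zmod (p := p) (k := 2) two_pos (by omega); push_cast at this
    exact this
  have h3 : (3 : ZMod p) ≠ 0 := by
    have := natcast_ne_zero_zmod (p := p) (k := 3) three_pos (by omega); push_cast at this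
    exact this
  -- row formula
  have hrow : ∀ (v : ZMod p → ℝ) (n : ZMod p),
      S.mulVec v n = kappa3 r (n.val : ℤ) * v (n - 1)
        + (-kappa3 r (n.val : ℤ) - kbar3 r (n.val : ℤ)) * v n
        + (1 + kbar3 r (n.val : ℤ)) * v (n + 1) + (-1) * v (n + 2) := by
    intro v n
    have := sum4 (p := p) (n - 1) n (n + 1) (n + 2)
      (by intro h; apply h1; linear_combination -h)
      (by intro h; apply h2; linear_combination -h)
      (by intro h; apply h3; linear_combination -h)
      (by intro h; apply h1; linear_combination -h)
      (by intro h; apply h2; linear_combination -h)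
      (by intro h; apply h1; linear_combination -h)
      (kappa3 r (n.val : ℤ)) (-kappa3 r (n.val : ℤ) - kbar3 r (n.val : ℤ))
      (1 + kbar3 r (n.val : ℤ)) (-1) v
    rw [Matrix.mulVec, dotProduct]
    rw [← this]
    rfl
  -- casts
  have hvalcast : ∀ n : ZMod p, (((n.val : ℤ) : ZMod p)) = n := by
    intro n
    push_cast
    simp [ZMod.natCast_val, ZMod.cast_id]
  -- coordinate sequences lie in the kernel
  have hker_e : ∀ (i : Fin 3), S.mulVec (fun n : ZMod p => r (n.val : ℤ) i) = 0 := by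
    intro i
    funext n
    rw [hrow]
    have c1 : r (((n - 1 : ZMod p).val : ℤ)) = r ((n.val : ℤ) - 1) := by
      apply hper; push_cast [hvalcast]; ring
    have c2 : r (((n + 1 : ZMod p).val : ℤ)) = r ((n.val : ℤ) + 1) := by
      apply hper; push_cast [hvalcast]; ring
    have c3 : r (((n + 2 : ZMod p).val : ℤ)) = r ((n.val : ℤ) + 2) := by
      apply hper; push_cast [hvalcast]; ring
    have hk := key_rec r hr hτ (n.val : ℤ) i
    simp only [c1, c2, c3, Pi.zero_apply]
    linear_combination -hk
  -- the evaluation map from the kernel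
  have hcard : Module.finrank ℝ (ZMod p → ℝ) = p := by
    rw [Module.finrank_fintype_fun_eq_card, ZMod.card]
  have hkerdim : Module.finrank ℝ (LinearMap.ker S.mulVecLin) = 3 := by
    let Ψ : (LinearMap.ker S.mulVecLin) →ₗ[ℝ] (Fin 3 → ℝ) :=
      { toFun := fun v => fun j : Fin 3 => v.1 (((j : ℕ) : ZMod p))
        map_add' := fun v w => rfl
        map_smul' := fun c v => rfl }
    have hinj : Function.Injective Ψ := by
      intro v w hvw
      ext n
      have hvw' : ∀ j : Fin 3, v.1 (((j : ℕ) : ZMod p)) = w.1 (((j : ℕ) : ZMod p)) :=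
        fun j => congrFun hvw j
      have main : ∀ j : ℕ, v.1 ((j : ZMod p)) = w.1 ((j : ZMod p)) := by
        intro j
        induction j using Nat.strong_induction_on with
        | _ j ih =>
          match j with
          | 0 => exact hvw' 0
          | 1 => exact hvw' 1
          | 2 => exact hvw' 2
          | (j+3) =>
            have hv := congrFun v.2 ((j : ZMod p) + 1)
            have hw := congrFun w.2 ((j : ZMod p) + 1)
            rw [Matrix.mulVecLin_apply] at hv hw
            rw [hrow] at hv hw
            have e0 : ((j : ZMod p) + 1) - 1 = (j : ZMod p) := by ring
            have e1 : ((j : ZMod p) + 1) + 1 = ((j + 2 : ℕ) : ZMod p) := by push_cast; ring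
            have e2 : ((j : ZMod p) + 1) + 2 = ((j + 3 : ℕ) : ZMod p) := by push_cast; ring
            have e3 : ((j : ZMod p) + 1) = ((j + 1 : ℕ) : ZMod p) := by push_cast; ring
            rw [e0, e1, e2, e3] at hv hw
            have i0 := ih j (by omega)
            have i1 := ih (j + 1) (by omega)
            have i2 := ih (j + 2) (by omega)
            have hκ : kappa3 r ((((j + 1 : ℕ) : ZMod p)).val : ℤ) ≠ 0 ∨ True := Or.inr trivial
            -- solve for value at j+3
            have hv' : v.1 ((j + 3 : ℕ) : ZMod p) =
                kappa3 r ((((j + 1 : ℕ) : ZMod p)).val : ℤ) * v.1 ((j : ZMod p))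
                + (-kappa3 r ((((j + 1 : ℕ) : ZMod p)).val : ℤ)
                    - kbar3 r ((((j + 1 : ℕ) : ZMod p)).val : ℤ)) * v.1 ((j + 1 : ℕ) : ZMod p)
                + (1 + kbar3 r ((((j + 1 : ℕ) : ZMod p)).val : ℤ)) * v.1 ((j + 2 : ℕ) : ZMod p) := by
              have := hv
              simp only [Pi.zero_apply] at this
              linarith
            have hw' : w.1 ((j + 3 : ℕ) : ZMod p) =
                kappa3 r ((((j + 1 : ℕ) : ZMod p)).val : ℤ) * w.1 ((j : ZMod p))
                + (-kappa3 r ((((j + 1 : ℕ) : ZMod p)).val : ℤ)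
                    - kbar3 r ((((j + 1 : ℕ) : ZMod p)).val : ℤ)) * w.1 ((j + 1 : ℕ) : ZMod p)
                + (1 + kbar3 r ((((j + 1 : ℕ) : ZMod p)).val : ℤ)) * w.1 ((j + 2 : ℕ) : ZMod p) := by
              have := hw
              simp only [Pi.zero_apply] at this
              linarith
            rw [hv', hw', i0, i1, i2]
      have := main n.val
      rwa [show ((n.val : ℕ) : ZMod p) = n from by simp [ZMod.natCast_val, ZMod.cast_id]] at this
    have hsurj : Function.Surjective Ψ := by
      intro x
      set B : Matrix (Fin 3) (Fin 3) ℝ := Matrix.of ![r 0, r 1, r 2] with hB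
      have hdetB : B.det ≠ 0 := by
        have h := hr 1
        rw [show (1 : ℤ) - 1 = 0 by ring, show (1 : ℤ) + 1 = 2 by ring] at h
        exact h
      set c : Fin 3 → ℝ := B⁻¹.mulVec x with hc
      have hBc : B.mulVec c = x := by
        rw [hc, Matrix.mulVec_mulVec, Matrix.mul_nonsing_inv _ (isUnit_iff_ne_zero.mpr hdetB),
          Matrix.one_mulVec]
      set w : ZMod p → ℝ := fun n => ∑ i : Fin 3, c i * r (n.val : ℤ) i with hw
      have hwker : w ∈ LinearMap.ker S.mulVecLin := by
        rw [LinearMap.mem_ker]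
        have hwsum : w = ∑ i : Fin 3, c i • (fun n : ZMod p => r (n.val : ℤ) i) := by
          funext n
          simp [hw]
        rw [hwsum, map_sum]
        have hterm : ∀ i : Fin 3,
            S.mulVecLin (c i • fun n : ZMod p => r (n.val : ℤ) i) = 0 := by
          intro i
          rw [map_smul, Matrix.mulVecLin_apply, hker_e i, smul_zero]
        rw [Finset.sum_congr rfl fun i _ => hterm i]
        simp
      refine ⟨⟨w, hwker⟩, ?_⟩
      funext j
      show w (((j : ℕ) : ZMod p)) = x j
      have hval : (((j : ℕ) : ZMod p)).val = (j : ℕ) :=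
        ZMod.val_cast_of_lt (by have := j.isLt; omega)
      have hbc := congrFun hBc j
      rw [Matrix.mulVec, dotProduct] at hbc
      rw [hw]
      simp only [hval]
      fin_cases j <;> simp [Fin.sum_univ_three, hB] at hbc ⊢ <;> linear_combination hbc
    have equiv := LinearEquiv.ofBijective Ψ ⟨hinj, hsurj⟩
    rw [equiv.finrank_eq, Module.finrank_fintype_fun_eq_card, Fintype.card_fin]
  have hrn := LinearMap.finrank_range_add_finrank_ker S.mulVecLin
  rw [hcard, hkerdim] at hrn
  rw [Matrix.rank]
  omega
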